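/- Let {x_k} be generated by the LMMSS line-search algorithm (as in Theorem on global convergence): ν, η, ϑ ∈ (0,1); F(x_k) ≠ 0 for all k; d_k solves (J(x_k)ᵀJ(x_k) + λ_k LᵀL)d_k = −J(x_k)ᵀF(x_k) with λ_k = ‖F(x_k)‖²; α_k = 1 if ‖F(x_k + d_k)‖ ≤ ϑ‖F(x_k)‖ and otherwise α_k = η^{m_k} with m_k the smallest non-negative integer m such that φ(x_k + η^m d_k) − φ(x_k) ≤ ν η^m ∇φ(x_k)ᵀd_k, where φ(x) = ½‖F(x)‖²; x_{k+1} = x_k + α_k d_k. Suppose a limit point x* of {x_k} satisfies F(x*) = 0 and the local assumptions hold at x*. Then there exists k₀ such that α_k = 1 and ‖F(x_{k+1})‖ ≤ ϑ‖F(x_k)‖ for all k ≥ k₀, and the sequence {dist(x_k, X*)} converges to 0 quadratically, i.e. dist(x_{k+1}, X*) ≤ c₅·dist(x_k, X*)² for all k ≥ k₀ and dist(x_k, X*) → 0. -/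
import Mathlib


open Matrix Metric Filter RealInnerProductSpace

/-- The continuous linear map on Euclidean spaces induced by a real matrix. -/
noncomputable def matCLM {m n : ℕ} (A : Matrix (Fin m) (Fin n) ℝ) :
    EuclideanSpace ℝ (Fin n) →L[ℝ] EuclideanSpace ℝ (Fin m) :=
  LinearMap.toContinuousLinearMap (Matrix.toEuclideanLin A)

/-- `c₃ = (1/(c₂√γ))·√(c₁² + c₂²(nL² + c_F²))`, where `nL = ‖L‖` (spectral norm). -/
noncomputable def lmC3 (c1 c2 cF γ nL : ℝ) : ℝ :=
  (1 / (c2 * Real.sqrt γ)) * Real.sqrt (c1 ^ 2 + c2 ^ 2 * (nL ^ 2 + cF ^ 2))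

/-- `c₄ = √(c₁² + c_F²·nL²)`, where `nL = ‖L‖` (spectral norm). -/
noncomputable def lmC4 (c1 cF nL : ℝ) : ℝ :=
  Real.sqrt (c1 ^ 2 + cF ^ 2 * nL ^ 2)

/-- `c₅ = (c₁c₃² + c₄)/c₂`. -/
noncomputable def lmC5 (c1 c2 cF γ nL : ℝ) : ℝ :=
  (c1 * (lmC3 c1 c2 cF γ nL) ^ 2 + lmC4 c1 cF nL) / c2

section helpers

variable {m n p q : ℕ}

lemma matCLM_add (A B : Matrix (Fin m) (Fin n) ℝ) (v : EuclideanSpace ℝ (Fin n)) :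
    matCLM (A + B) v = matCLM A v + matCLM B v := by
  simp [matCLM, map_add]

lemma matCLM_smul (c : ℝ) (A : Matrix (Fin m) (Fin n) ℝ) (v : EuclideanSpace ℝ (Fin n)) :
    matCLM (c • A) v = c • matCLM A v := by
  simp [matCLM, _root_.map_smul]

lemma matCLM_mul (A : Matrix (Fin m) (Fin n) ℝ) (B : Matrix (Fin n) (Fin q) ℝ)
    (v : EuclideanSpace ℝ (Fin q)) : matCLM (A * B) v = matCLM A (matCLM B v) := by
  simp only [matCLM, LinearMap.coe_toContinuousLinearMap', Matrix.toEuclideanLin_apply]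
  simp [Matrix.mulVec_mulVec]

lemma matCLM_transpose_inner (A : Matrix (Fin m) (Fin n) ℝ)
    (u : EuclideanSpace ℝ (Fin m)) (v : EuclideanSpace ℝ (Fin n)) :
    ⟪matCLM Aᵀ u, v⟫ = ⟪u, matCLM A v⟫ := by
  have h : Aᵀ = Aᴴ := by
    ext i j; simp [Matrix.conjTranspose_apply]
  rw [show matCLM Aᵀ u = (Matrix.toEuclideanLin Aᴴ) u by rw [h]; rfl,
    show matCLM A v = (Matrix.toEuclideanLin A) v from rfl,
    Matrix.toEuclideanLin_conjTranspose_eq_adjoint]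
  exact LinearMap.adjoint_inner_left _ _ _

end helpers

lemma psi_min {E F G : Type*} [NormedAddCommGroup E] [InnerProductSpace ℝ E]
    [NormedAddCommGroup F] [InnerProductSpace ℝ F]
    [NormedAddCommGroup G] [InnerProductSpace ℝ G]
    (Jk : E →L[ℝ] F) (Lc : E →L[ℝ] G) (f : F) (lam : ℝ) (hlam : 0 ≤ lam) (d : E)
    (hNE : ∀ w : E, ⟪Jk d, Jk w⟫ + lam * ⟪Lc d, Lc w⟫ = -⟪f, Jk w⟫) (e : E) :
    ‖f + Jk d‖ ^ 2 + lam * ‖Lc d‖ ^ 2 ≤ ‖f + Jk e‖ ^ 2 + lam * ‖Lc e‖ ^ 2 := by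
  set u := e - d with hu
  have he : Jk e = Jk d + Jk u := by rw [hu, map_sub]; abel
  have hle : Lc e = Lc d + Lc u := by rw [hu, map_sub]; abel
  have h1 : ‖f + Jk e‖ ^ 2 = ‖(f + Jk d) + Jk u‖ ^ 2 := by rw [he, add_assoc]
  have h2 : ‖(f + Jk d) + Jk u‖ ^ 2
      = ‖f + Jk d‖ ^ 2 + 2 * ⟪f + Jk d, Jk u⟫ + ‖Jk u‖ ^ 2 := norm_add_sq_real _ _
  have h3 : ‖Lc d + Lc u‖ ^ 2 = ‖Lc d‖ ^ 2 + 2 * ⟪Lc d, Lc u⟫ + ‖Lc u‖ ^ 2 :=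
    norm_add_sq_real _ _
  have h4 : ⟪f + Jk d, Jk u⟫ = ⟪f, Jk u⟫ + ⟪Jk d, Jk u⟫ := inner_add_left _ _ _
  have h5 := hNE u
  have h6 : (0:ℝ) ≤ ‖Jk u‖ ^ 2 := sq_nonneg _
  have h7 : (0:ℝ) ≤ lam * ‖Lc u‖ ^ 2 := mul_nonneg hlam (sq_nonneg _)
  rw [h1, h2, hle, h3]
  nlinarith [h5, h4]

lemma lmC3_nonneg (c1 c2 cF γ nL : ℝ) (hc2 : 0 < c2) (hγ : 0 < γ) :
    0 ≤ lmC3 c1 c2 cF γ nL := by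
  unfold lmC3; positivity

lemma lmC3_sq (c1 c2 cF γ nL : ℝ) (hc2 : 0 < c2) (hγ : 0 < γ) :
    (lmC3 c1 c2 cF γ nL) ^ 2 * (c2 ^ 2 * γ) = c1 ^ 2 + c2 ^ 2 * (nL ^ 2 + cF ^ 2) := by
  have hS : (0:ℝ) ≤ c1 ^ 2 + c2 ^ 2 * (nL ^ 2 + cF ^ 2) := by positivity
  unfold lmC3
  rw [mul_pow, Real.sq_sqrt hS, div_pow, mul_pow, Real.sq_sqrt hγ.le, one_pow]
  field_simp

lemma lmC4_sq (c1 cF nL : ℝ) : (lmC4 c1 cF nL) ^ 2 = c1 ^ 2 + cF ^ 2 * nL ^ 2 :=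
  Real.sq_sqrt (by positivity)

lemma lmC5_eq (c1 c2 cF γ nL : ℝ) (hc2 : 0 < c2) :
    c2 * lmC5 c1 c2 cF γ nL = c1 * (lmC3 c1 c2 cF γ nL) ^ 2 + lmC4 c1 cF nL := by
  unfold lmC5; field_simp


lemma lmC5_pos (c1 c2 cF γ nL : ℝ) (hc1 : 0 < c1) (hc2 : 0 < c2) (hcF : 0 < cF)
    (hγ : 0 < γ) : 0 < lmC5 c1 c2 cF γ nL := by
  have h4 : 0 < lmC4 c1 cF nL := by
    unfold lmC4
    apply Real.sqrt_pos.mpr; positivity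
  have h3 := lmC3_nonneg c1 c2 cF γ nL hc2 hγ
  unfold lmC5
  apply div_pos _ hc2
  nlinarith


set_option maxHeartbeats 1000000 in
/-- Workhorse local lemma. -/
lemma workhorse {n m p : ℕ}
    (F : EuclideanSpace ℝ (Fin n) → EuclideanSpace ℝ (Fin m))
    (hFcont : Continuous F)
    (J : EuclideanSpace ℝ (Fin n) → Matrix (Fin m) (Fin n) ℝ)
    (L : Matrix (Fin p) (Fin n) ℝ) (γ : ℝ) (hγ : 0 < γ)
    (hcomp : ∀ (x : EuclideanSpace ℝ (Fin n)) (v : EuclideanSpace ℝ (Fin n)),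
      ‖matCLM (J x) v‖ ^ 2 + ‖matCLM L v‖ ^ 2 ≥ γ * ‖v‖ ^ 2)
    (xstar : EuclideanSpace ℝ (Fin n)) (hxstar : F xstar = 0)
    (δ : ℝ) (hδ0 : 0 < δ)
    (c1 : ℝ) (hc1pos : 0 < c1)
    (hc1 : ∀ z ∈ closedBall xstar (2 * δ), ∀ y ∈ closedBall xstar (2 * δ),
      ‖matCLM (J y) (z - y) - (F z - F y)‖ ≤ c1 * ‖z - y‖ ^ 2)
    (cF : ℝ) (hcFpos : 0 < cF)
    (hcF : ∀ z ∈ closedBall xstar (2 * δ), ∀ y ∈ closedBall xstar (2 * δ),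
      ‖F z - F y‖ ≤ cF * ‖z - y‖)
    (c2 : ℝ) (hc2pos : 0 < c2)
    (hc2 : ∀ z ∈ closedBall xstar (2 * δ),
      c2 * infDist z {y | F y = 0} ≤ ‖F z‖)
    (x : EuclideanSpace ℝ (Fin n)) (hx : dist x xstar ≤ δ) (hFx : F x ≠ 0)
    (d : EuclideanSpace ℝ (Fin n))
    (hd : matCLM ((J x)ᵀ * J x + ‖F x‖ ^ 2 • (Lᵀ * L)) d = -(matCLM (J x)ᵀ (F x)))
    (hc3δ : lmC3 c1 c2 cF γ ‖matCLM L‖ * infDist x {y | F y = 0} ≤ δ) :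
    ‖d‖ ≤ lmC3 c1 c2 cF γ ‖matCLM L‖ * infDist x {y | F y = 0} ∧
    ‖F (x + d)‖ ≤ c2 * lmC5 c1 c2 cF γ ‖matCLM L‖ * infDist x {y | F y = 0} ^ 2 ∧
    infDist (x + d) {y | F y = 0} ≤
      lmC5 c1 c2 cF γ ‖matCLM L‖ * infDist x {y | F y = 0} ^ 2 := by
  have hXcl : IsClosed {y | F y = 0} := by
    have : {y | F y = 0} = F ⁻¹' {0} := by ext y; simp
    rw [this]; exact IsClosed.preimage hFcont isClosed_singleton
  have hXne : xstar ∈ {y | F y = 0} := hxstar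
  obtain ⟨xb, hxbX, hxbd⟩ := hXcl.exists_infDist_eq_dist ⟨xstar, hXne⟩ x
  set nL : ℝ := ‖matCLM L‖ with hnL
  set c3 : ℝ := lmC3 c1 c2 cF γ nL with hc3def
  set c4 : ℝ := lmC4 c1 cF nL with hc4def
  set c5 : ℝ := lmC5 c1 c2 cF γ nL with hc5def
  set s : ℝ := infDist x {y | F y = 0} with hs
  have hFxb0 : F xb = 0 := hxbX
  have hnLnn : 0 ≤ nL := norm_nonneg _
  have hc3nn : 0 ≤ c3 := lmC3_nonneg _ _ _ _ _ hc2pos hγ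
  have hc4nn : 0 ≤ c4 := Real.sqrt_nonneg _
  have hsnn : 0 ≤ s := infDist_nonneg
  have hsδ : s ≤ δ := le_trans (infDist_le_dist_of_mem hXne) hx
  have hspos : 0 < s := by
    rcases lt_or_eq_of_le hsnn with h | h
    · exact h
    · exfalso
      have h0 : dist x xb = 0 := by rw [← hxbd]; exact h.symm
      have hxx : x = xb := by rwa [dist_eq_zero] at h0
      exact hFx (hxx ▸ hFxb0)
  have hxball : x ∈ closedBall xstar (2 * δ) := by
    rw [mem_closedBall]; linarith
  have hxbball : xb ∈ closedBall xstar (2 * δ) := by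
    rw [mem_closedBall]
    calc dist xb xstar ≤ dist xb x + dist x xstar := dist_triangle _ _ _
      _ ≤ s + δ := by rw [dist_comm xb x, ← hxbd]; exact add_le_add le_rfl hx
      _ ≤ 2 * δ := by linarith
  have hxxb : ‖x - xb‖ = s := by rw [← dist_eq_norm, ← hxbd]
  have hxbx : ‖xb - x‖ = s := by rw [norm_sub_rev, hxxb]
  have hFub : ‖F x‖ ≤ cF * s := by
    have h := hcF x hxball xb hxbball
    rwa [hFxb0, sub_zero, hxxb] at h
  have hFlb : c2 * s ≤ ‖F x‖ := hc2 x hxball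
  set lam : ℝ := ‖F x‖ ^ 2 with hlamdef
  have hlam : 0 < lam := by
    have : 0 < ‖F x‖ := norm_pos_iff.mpr hFx
    positivity
  have hlamub : lam ≤ cF ^ 2 * s ^ 2 := by
    have := pow_le_pow_left₀ (norm_nonneg (F x)) hFub 2
    rw [mul_pow] at this
    exact this
  have hlamlb : c2 ^ 2 * s ^ 2 ≤ lam := by
    have := pow_le_pow_left₀ (by positivity : (0:ℝ) ≤ c2 * s) hFlb 2
    rw [mul_pow] at this
    exact this
  set Jk := matCLM (J x) with hJk
  set Lc := matCLM L with hLcdef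
  -- normal equation
  have hd1 : matCLM ((J x)ᵀ * J x) d + lam • matCLM (Lᵀ * L) d = -(matCLM (J x)ᵀ (F x)) := by
    rw [← matCLM_smul, ← matCLM_add]; exact hd
  have hNE : ∀ w : EuclideanSpace ℝ (Fin n),
      ⟪Jk d, Jk w⟫ + lam * ⟪Lc d, Lc w⟫ = -⟪F x, Jk w⟫ := by
    intro w
    calc ⟪Jk d, Jk w⟫ + lam * ⟪Lc d, Lc w⟫
        = ⟪matCLM ((J x)ᵀ * J x) d + lam • matCLM (Lᵀ * L) d, w⟫ := by
          rw [inner_add_left, real_inner_smul_left, matCLM_mul, matCLM_mul,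
            matCLM_transpose_inner, matCLM_transpose_inner]
      _ = ⟪-(matCLM (J x)ᵀ (F x)), w⟫ := by rw [hd1]
      _ = -⟪F x, Jk w⟫ := by rw [inner_neg_left, matCLM_transpose_inner]
  have hmin := psi_min Jk Lc (F x) lam hlam.le d hNE (xb - x)
  -- bounds on ψ(e)
  have hc1e : ‖F x + Jk (xb - x)‖ ≤ c1 * s ^ 2 := by
    have h := hc1 xb hxbball x hxball
    rw [hFxb0, zero_sub, sub_neg_eq_add, hxbx] at h
    rw [add_comm]
    exact h
  have hLe : ‖Lc (xb - x)‖ ≤ nL * s := by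
    calc ‖Lc (xb - x)‖ ≤ nL * ‖xb - x‖ := Lc.le_opNorm _
      _ = nL * s := by rw [hxbx]
  have hpsibar : ‖F x + Jk (xb - x)‖ ^ 2 + lam * ‖Lc (xb - x)‖ ^ 2
      ≤ c1 ^ 2 * s ^ 4 + lam * (nL ^ 2 * s ^ 2) := by
    have h1 : ‖F x + Jk (xb - x)‖ ^ 2 ≤ c1 ^ 2 * s ^ 4 := by
      have := pow_le_pow_left₀ (norm_nonneg _) hc1e 2
      calc ‖F x + Jk (xb - x)‖ ^ 2 ≤ (c1 * s ^ 2) ^ 2 := this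
        _ = c1 ^ 2 * s ^ 4 := by ring
    have h2 : ‖Lc (xb - x)‖ ^ 2 ≤ nL ^ 2 * s ^ 2 := by
      have := pow_le_pow_left₀ (norm_nonneg _) hLe 2
      calc ‖Lc (xb - x)‖ ^ 2 ≤ (nL * s) ^ 2 := this
        _ = nL ^ 2 * s ^ 2 := by ring
    have h3 := mul_le_mul_of_nonneg_left h2 hlam.le
    linarith
  -- ‖Jk d‖ ≤ ‖F x‖
  have hNEd := hNE d
  rw [real_inner_self_eq_norm_sq, real_inner_self_eq_norm_sq] at hNEd
  have hcsd : -⟪F x, Jk d⟫ ≤ ‖F x‖ * ‖Jk d‖ := by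
    have h := abs_real_inner_le_norm (F x) (Jk d)
    have h' := neg_abs_le (⟪F x, Jk d⟫ : ℝ)
    linarith
  have hJd : ‖Jk d‖ ≤ ‖F x‖ := by
    by_contra hcon
    push_neg at hcon
    have h0 : 0 < ‖Jk d‖ := lt_of_le_of_lt (norm_nonneg (F x)) hcon
    have hsq : ‖Jk d‖ * ‖Jk d‖ = ‖Jk d‖ ^ 2 := by ring
    have hlt := mul_lt_mul_of_pos_right hcon h0
    have hnn := mul_nonneg hlam.le (sq_nonneg ‖Lc d‖)
    linarith
  have hJd2 : ‖Jk d‖ ^ 2 ≤ cF ^ 2 * s ^ 2 := by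
    have := pow_le_pow_left₀ (norm_nonneg _) (hJd.trans hFub) 2
    rw [mul_pow] at this
    exact this
  have hLd : lam * ‖Lc d‖ ^ 2 ≤ c1 ^ 2 * s ^ 4 + lam * (nL ^ 2 * s ^ 2) := by
    linarith [hmin, hpsibar, sq_nonneg ‖F x + Jk d‖]
  have hfJd2 : ‖F x + Jk d‖ ^ 2 ≤ c1 ^ 2 * s ^ 4 + lam * (nL ^ 2 * s ^ 2) := by
    linarith [hmin, hpsibar, mul_nonneg hlam.le (sq_nonneg ‖Lc d‖)]
  -- bound on d
  have hcomp' : γ * ‖d‖ ^ 2 ≤ ‖Jk d‖ ^ 2 + ‖Lc d‖ ^ 2 := hcomp x d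
  have hkey2 : c2 ^ 2 * γ * ‖d‖ ^ 2 ≤ (c1 ^ 2 + c2 ^ 2 * (nL ^ 2 + cF ^ 2)) * s ^ 2 := by
    have hkey : lam * (c2 ^ 2 * γ * ‖d‖ ^ 2)
        ≤ lam * ((c1 ^ 2 + c2 ^ 2 * (nL ^ 2 + cF ^ 2)) * s ^ 2) := by
      have A1 : lam * c2 ^ 2 * (γ * ‖d‖ ^ 2) ≤ lam * c2 ^ 2 * (‖Jk d‖ ^ 2 + ‖Lc d‖ ^ 2) :=
        mul_le_mul_of_nonneg_left hcomp' (by positivity)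
      have A2 : lam * c2 ^ 2 * ‖Jk d‖ ^ 2 ≤ lam * c2 ^ 2 * (cF ^ 2 * s ^ 2) :=
        mul_le_mul_of_nonneg_left hJd2 (by positivity)
      have A3 : c2 ^ 2 * (lam * ‖Lc d‖ ^ 2)
          ≤ c2 ^ 2 * (c1 ^ 2 * s ^ 4 + lam * (nL ^ 2 * s ^ 2)) :=
        mul_le_mul_of_nonneg_left hLd (by positivity)
      have A4 : c2 ^ 2 * s ^ 2 * (c1 ^ 2 * s ^ 2) ≤ lam * (c1 ^ 2 * s ^ 2) :=
        mul_le_mul_of_nonneg_right hlamlb (by positivity)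
      linarith [A1, A2, A3, A4]
    exact le_of_mul_le_mul_left hkey hlam
  have hc3sq := lmC3_sq c1 c2 cF γ nL hc2pos hγ
  have hd2 : ‖d‖ ^ 2 ≤ (c3 * s) ^ 2 := by
    have h : ‖d‖ ^ 2 * (c2 ^ 2 * γ) ≤ (c3 * s) ^ 2 * (c2 ^ 2 * γ) := by
      have : (c3 * s) ^ 2 * (c2 ^ 2 * γ) = (c1 ^ 2 + c2 ^ 2 * (nL ^ 2 + cF ^ 2)) * s ^ 2 := by
        rw [mul_pow]
        calc c3 ^ 2 * s ^ 2 * (c2 ^ 2 * γ) = c3 ^ 2 * (c2 ^ 2 * γ) * s ^ 2 := by ring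
          _ = (c1 ^ 2 + c2 ^ 2 * (nL ^ 2 + cF ^ 2)) * s ^ 2 := by rw [hc3sq]
      rw [this]
      calc ‖d‖ ^ 2 * (c2 ^ 2 * γ) = c2 ^ 2 * γ * ‖d‖ ^ 2 := by ring
        _ ≤ (c1 ^ 2 + c2 ^ 2 * (nL ^ 2 + cF ^ 2)) * s ^ 2 := hkey2
    exact le_of_mul_le_mul_right h (by positivity)
  have hdle : ‖d‖ ≤ c3 * s := by
    have h := Real.sqrt_le_sqrt hd2
    rwa [Real.sqrt_sq (norm_nonneg d), Real.sqrt_sq (by positivity)] at h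
  refine ⟨hdle, ?_⟩
  -- residual bound at x + d
  have hfJd : ‖F x + Jk d‖ ≤ c4 * s ^ 2 := by
    have hc4sq := lmC4_sq c1 cF nL
    have h : ‖F x + Jk d‖ ^ 2 ≤ (c4 * s ^ 2) ^ 2 := by
      have h5 : lam * (nL ^ 2 * s ^ 2) ≤ cF ^ 2 * s ^ 2 * (nL ^ 2 * s ^ 2) :=
        mul_le_mul_of_nonneg_right hlamub (by positivity)
      calc ‖F x + Jk d‖ ^ 2 ≤ c1 ^ 2 * s ^ 4 + lam * (nL ^ 2 * s ^ 2) := hfJd2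
        _ ≤ c1 ^ 2 * s ^ 4 + cF ^ 2 * s ^ 2 * (nL ^ 2 * s ^ 2) := by linarith
        _ = (c1 ^ 2 + cF ^ 2 * nL ^ 2) * (s ^ 2) ^ 2 := by ring
        _ = (c4 * s ^ 2) ^ 2 := by rw [mul_pow, hc4sq]
    have h' := Real.sqrt_le_sqrt h
    rwa [Real.sqrt_sq (norm_nonneg _), Real.sqrt_sq (by positivity)] at h'
  have hxdball : x + d ∈ closedBall xstar (2 * δ) := by
    rw [mem_closedBall, dist_eq_norm]
    calc ‖x + d - xstar‖ = ‖(x - xstar) + d‖ := by rw [add_sub_right_comm]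
      _ ≤ ‖x - xstar‖ + ‖d‖ := norm_add_le _ _
      _ ≤ δ + c3 * s := by
          rw [← dist_eq_norm]; exact add_le_add hx hdle
      _ ≤ 2 * δ := by linarith
  have hc1d := hc1 (x + d) hxdball x hxball
  rw [add_sub_cancel_left] at hc1d
  have hFxd : ‖F (x + d)‖ ≤ c2 * c5 * s ^ 2 := by
    have heq : Jk d - (F (x + d) - F x) = (F x + Jk d) - F (x + d) := by abel
    rw [heq] at hc1d
    have h1 : ‖F (x + d)‖ ≤ ‖(F x + Jk d) - F (x + d)‖ + ‖F x + Jk d‖ := by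
      have h' := norm_sub_le ((F x + Jk d) - F (x + d)) (F x + Jk d)
      calc ‖F (x + d)‖ = ‖((F x + Jk d) - F (x + d)) - (F x + Jk d)‖ := by
            rw [show ((F x + Jk d) - F (x + d)) - (F x + Jk d) = -(F (x + d)) by abel, norm_neg]
        _ ≤ ‖(F x + Jk d) - F (x + d)‖ + ‖F x + Jk d‖ := h'
    have h2 : c1 * ‖d‖ ^ 2 ≤ c1 * (c3 ^ 2 * s ^ 2) := by
      apply mul_le_mul_of_nonneg_left _ hc1pos.le
      calc ‖d‖ ^ 2 ≤ (c3 * s) ^ 2 := hd2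
        _ = c3 ^ 2 * s ^ 2 := by ring
    have h5eq := lmC5_eq c1 c2 cF γ nL hc2pos
    calc ‖F (x + d)‖ ≤ ‖(F x + Jk d) - F (x + d)‖ + ‖F x + Jk d‖ := h1
      _ ≤ c1 * ‖d‖ ^ 2 + c4 * s ^ 2 := add_le_add hc1d hfJd
      _ ≤ c1 * (c3 ^ 2 * s ^ 2) + c4 * s ^ 2 := by linarith
      _ = (c1 * c3 ^ 2 + c4) * s ^ 2 := by ring
      _ = c2 * c5 * s ^ 2 := by rw [h5eq]
  refine ⟨hFxd, ?_⟩
  have h := hc2 (x + d) hxdball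
  have hh : c2 * infDist (x + d) {y | F y = 0} ≤ c2 * (c5 * s ^ 2) := by
    calc c2 * infDist (x + d) {y | F y = 0} ≤ ‖F (x + d)‖ := h
      _ ≤ c2 * c5 * s ^ 2 := hFxd
      _ = c2 * (c5 * s ^ 2) := by ring
  exact le_of_mul_le_mul_left hh hc2pos

/-- if a limit point `x*` of the LMMSS line-search sequence satisfies
`F(x*) = 0` and the local assumptions hold at `x*`, then eventually the full step `α_k = 1`
is taken with `‖F(x_{k+1})‖ ≤ ϑ‖F(x_k)‖`, and `dist(x_k, X*) → 0` quadratically. -/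
theorem lmmss_linesearch_local_quadratic_convergence
    (n m p : ℕ)
    (F : EuclideanSpace ℝ (Fin n) → EuclideanSpace ℝ (Fin m))
    (J : EuclideanSpace ℝ (Fin n) → Matrix (Fin m) (Fin n) ℝ)
    (hdiff : ∀ x, HasFDerivAt F (matCLM (J x)) x)
    (hJcont : Continuous J)
    (L : Matrix (Fin p) (Fin n) ℝ) (γ : ℝ) (hγ : 0 < γ)
    (hcomp : ∀ (x : EuclideanSpace ℝ (Fin n)) (v : EuclideanSpace ℝ (Fin n)),
      ‖matCLM (J x) v‖ ^ 2 + ‖matCLM L v‖ ^ 2 ≥ γ * ‖v‖ ^ 2)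
    (ν η ϑ : ℝ) (hν : ν ∈ Set.Ioo (0 : ℝ) 1) (hη : η ∈ Set.Ioo (0 : ℝ) 1)
    (hϑ : ϑ ∈ Set.Ioo (0 : ℝ) 1)
    (x d : ℕ → EuclideanSpace ℝ (Fin n)) (α : ℕ → ℝ)
    (hFk : ∀ k, F (x k) ≠ 0)
    (hd : ∀ k,
      matCLM ((J (x k))ᵀ * J (x k) + ‖F (x k)‖ ^ 2 • (Lᵀ * L)) (d k) =
        -(matCLM (J (x k))ᵀ (F (x k))))
    (hα : ∀ k,
      (‖F (x k + d k)‖ ≤ ϑ * ‖F (x k)‖ ∧ α k = 1) ∨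
      (¬ (‖F (x k + d k)‖ ≤ ϑ * ‖F (x k)‖) ∧ ∃ mk : ℕ, α k = η ^ mk ∧
        ((1 : ℝ) / 2) * ‖F (x k + η ^ mk • d k)‖ ^ 2 - ((1 : ℝ) / 2) * ‖F (x k)‖ ^ 2 ≤
          ν * η ^ mk * ⟪matCLM (J (x k))ᵀ (F (x k)), d k⟫ ∧
        ∀ m' : ℕ, m' < mk →
          ¬ (((1 : ℝ) / 2) * ‖F (x k + η ^ m' • d k)‖ ^ 2 - ((1 : ℝ) / 2) * ‖F (x k)‖ ^ 2 ≤
            ν * η ^ m' * ⟪matCLM (J (x k))ᵀ (F (x k)), d k⟫)))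
    (hstep : ∀ k, x (k + 1) = x k + α k • d k)
    (xstar : EuclideanSpace ℝ (Fin n))
    (hlimit : ∃ K : ℕ → ℕ, StrictMono K ∧ Tendsto (fun k => x (K k)) atTop (nhds xstar))
    (hxstar : F xstar = 0)
    (δ : ℝ) (hδ0 : 0 < δ) (hδh : δ < 1 / 2)
    (c1 : ℝ) (hc1pos : 0 < c1)
    (hc1 : ∀ z ∈ closedBall xstar (2 * δ), ∀ y ∈ closedBall xstar (2 * δ),
      ‖matCLM (J y) (z - y) - (F z - F y)‖ ≤ c1 * ‖z - y‖ ^ 2)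
    (cF : ℝ) (hcFpos : 0 < cF)
    (hcF : ∀ z ∈ closedBall xstar (2 * δ), ∀ y ∈ closedBall xstar (2 * δ),
      ‖F z - F y‖ ≤ cF * ‖z - y‖)
    (c2 : ℝ) (hc2pos : 0 < c2)
    (hc2 : ∀ z ∈ closedBall xstar (2 * δ),
      c2 * infDist z {y | F y = 0} ≤ ‖F z‖) :
    ∃ k0 : ℕ,
      (∀ k ≥ k0, α k = 1 ∧ ‖F (x (k + 1))‖ ≤ ϑ * ‖F (x k)‖) ∧
      (∀ k ≥ k0, infDist (x (k + 1)) {y | F y = 0} ≤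
        lmC5 c1 c2 cF γ ‖matCLM L‖ * infDist (x k) {y | F y = 0} ^ 2) ∧
      Tendsto (fun k => infDist (x k) {y | F y = 0}) atTop (nhds 0) := by
  have hFcont : Continuous F := by
    rw [continuous_iff_continuousAt]
    exact fun z => (hdiff z).continuousAt
  set nL : ℝ := ‖matCLM L‖ with hnL
  set c3 : ℝ := lmC3 c1 c2 cF γ nL with hc3def
  set c5 : ℝ := lmC5 c1 c2 cF γ nL with hc5def
  have hc3nn : 0 ≤ c3 := lmC3_nonneg _ _ _ _ _ hc2pos hγ
  have hc5pos : 0 < c5 := lmC5_pos _ _ _ _ _ hc1pos hc2pos hcFpos hγ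
  have hXne : xstar ∈ {y | F y = 0} := hxstar
  -- choice of ε
  set ε : ℝ := min (δ / (1 + 2 * c3)) (min (ϑ / c5) (1 / (2 * c5))) with hεdef
  have h12c3 : (0:ℝ) < 1 + 2 * c3 := by linarith
  have hεpos : 0 < ε :=
    lt_min (div_pos hδ0 h12c3) (lt_min (div_pos hϑ.1 hc5pos) (by positivity))
  have hε1 : (1 + 2 * c3) * ε ≤ δ := by
    have h := min_le_left (δ / (1 + 2 * c3)) (min (ϑ / c5) (1 / (2 * c5)))
    rw [← hεdef] at h
    rw [mul_comm]
    exact (le_div_iff₀ h12c3).mp h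
  have hε2 : c5 * ε ≤ ϑ := by
    have h' : ε ≤ ϑ / c5 := le_trans (min_le_right _ _) (min_le_left _ _)
    rw [mul_comm]
    exact (le_div_iff₀ hc5pos).mp h'
  have hε3 : c5 * ε ≤ 1 / 2 := by
    have h' : ε ≤ 1 / (2 * c5) := le_trans (min_le_right _ _) (min_le_right _ _)
    have := mul_le_mul_of_nonneg_left h' hc5pos.le
    calc c5 * ε ≤ c5 * (1 / (2 * c5)) := this
      _ = 1 / 2 := by field_simp [mul_comm]
  -- find k0
  obtain ⟨K, hKmono, hKtend⟩ := hlimit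
  obtain ⟨N, hN⟩ := (Metric.tendsto_atTop.mp hKtend) ε hεpos
  set k0 : ℕ := K N with hk0
  have hk0ε : dist (x k0) xstar ≤ ε := (hN N le_rfl).le
  -- step lemma
  have hstepj : ∀ j : ℕ,
      dist (x (k0 + j)) xstar ≤ ε + 2 * c3 * ε * (1 - (1/2 : ℝ) ^ j) →
      infDist (x (k0 + j)) {y | F y = 0} ≤ ε * (1/2 : ℝ) ^ j →
      (α (k0 + j) = 1 ∧
       ‖F (x (k0 + j + 1))‖ ≤ ϑ * ‖F (x (k0 + j))‖ ∧
       infDist (x (k0 + j + 1)) {y | F y = 0} ≤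
         c5 * infDist (x (k0 + j)) {y | F y = 0} ^ 2 ∧
       dist (x (k0 + j + 1)) xstar ≤ ε + 2 * c3 * ε * (1 - (1/2 : ℝ) ^ (j+1)) ∧
       infDist (x (k0 + j + 1)) {y | F y = 0} ≤ ε * (1/2 : ℝ) ^ (j+1)) := by
    intro j Ij Isj
    have hq0 : (0:ℝ) ≤ (1/2 : ℝ) ^ j := by positivity
    have hq1 : (1/2 : ℝ) ^ j ≤ 1 := pow_le_one₀ (by norm_num) (by norm_num)
    set y := x (k0 + j) with hy
    set s : ℝ := infDist y {y' | F y' = 0} with hsdef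
    have hsnn : (0:ℝ) ≤ s := infDist_nonneg
    have hsε : s ≤ ε := by
      calc s ≤ ε * (1/2:ℝ)^j := Isj
        _ ≤ ε * 1 := mul_le_mul_of_nonneg_left hq1 hεpos.le
        _ = ε := mul_one ε
    have hyball : dist y xstar ≤ δ := by
      have : ε + 2 * c3 * ε * (1 - (1/2:ℝ)^j) ≤ (1 + 2 * c3) * ε := by nlinarith
      linarith [Ij]
    have hc3s : c3 * s ≤ δ := by
      have h1 : c3 * s ≤ c3 * ε := mul_le_mul_of_nonneg_left hsε hc3nn
      have h2 : c3 * ε ≤ (1 + 2 * c3) * ε := by nlinarith [hεpos.le]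
      linarith
    obtain ⟨hdb, hFb, hsb⟩ := workhorse F hFcont J L γ hγ hcomp xstar hxstar δ hδ0
      c1 hc1pos hc1 cF hcFpos hcF c2 hc2pos hc2 y hyball (hFk _) (d (k0 + j)) (hd _) hc3s
    have hyball2 : y ∈ closedBall xstar (2 * δ) := by
      rw [mem_closedBall]; linarith
    have hc2y := hc2 y hyball2
    have hθ : ‖F (y + d (k0 + j))‖ ≤ ϑ * ‖F y‖ := by
      have h1 : c5 * s ≤ ϑ := by
        have := mul_le_mul_of_nonneg_left hsε hc5pos.le
        linarith
      calc ‖F (y + d (k0 + j))‖ ≤ c2 * c5 * s ^ 2 := hFb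
        _ = (c5 * s) * (c2 * s) := by ring
        _ ≤ ϑ * (c2 * s) := mul_le_mul_of_nonneg_right h1 (by positivity)
        _ ≤ ϑ * ‖F y‖ := mul_le_mul_of_nonneg_left hc2y hϑ.1.le
    have hαc : α (k0 + j) = 1 := by
      rcases hα (k0 + j) with ⟨_, hαeq⟩ | ⟨hnot, _⟩
      · exact hαeq
      · exact absurd hθ hnot
    have hx1 : x (k0 + j + 1) = y + d (k0 + j) := by
      rw [hstep (k0 + j), hαc, one_smul]
    refine ⟨hαc, by rw [hx1]; exact hθ, by rw [hx1]; exact hsb, ?_, ?_⟩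
    · -- distance invariant
      have hds : c3 * s ≤ c3 * (ε * (1/2:ℝ)^j) := mul_le_mul_of_nonneg_left Isj hc3nn
      have hpow : (1/2:ℝ)^(j+1) = (1/2:ℝ)^j * (1/2) := pow_succ _ _
      have hdist : dist (x (k0 + j + 1)) xstar ≤ dist y xstar + ‖d (k0 + j)‖ := by
        rw [hx1]
        calc dist (y + d (k0 + j)) xstar ≤ dist (y + d (k0 + j)) y + dist y xstar :=
              dist_triangle _ _ _
          _ = ‖d (k0 + j)‖ + dist y xstar := by
              rw [dist_eq_norm, add_sub_cancel_left]
          _ = dist y xstar + ‖d (k0 + j)‖ := by ring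
      have : ‖d (k0 + j)‖ ≤ c3 * (ε * (1/2:ℝ)^j) := le_trans hdb hds
      rw [hpow]
      linarith [Ij, hdist, this]
    · -- infDist invariant
      have h1 : c5 * s ≤ 1/2 := by
        have := mul_le_mul_of_nonneg_left hsε hc5pos.le
        linarith
      have hpow : (1/2:ℝ)^(j+1) = (1/2:ℝ)^j * (1/2) := pow_succ _ _
      calc infDist (x (k0 + j + 1)) {y' | F y' = 0} ≤ c5 * s ^ 2 := by rw [hx1]; exact hsb
        _ = (c5 * s) * s := by ring
        _ ≤ (1/2) * s := mul_le_mul_of_nonneg_right h1 hsnn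
        _ ≤ (1/2) * (ε * (1/2:ℝ)^j) := mul_le_mul_of_nonneg_left Isj (by norm_num)
        _ = ε * (1/2:ℝ)^(j+1) := by rw [hpow]; ring
  -- invariants by induction
  have Inv : ∀ j : ℕ,
      dist (x (k0 + j)) xstar ≤ ε + 2 * c3 * ε * (1 - (1/2 : ℝ) ^ j) ∧
      infDist (x (k0 + j)) {y | F y = 0} ≤ ε * (1/2 : ℝ) ^ j := by
    intro j
    induction j with
    | zero =>
      constructor
      · simpa using hk0ε
      · simp only [pow_zero, mul_one, Nat.add_zero]
        exact le_trans (infDist_le_dist_of_mem hXne) hk0ε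
    | succ j ih =>
      obtain ⟨_, _, _, h4, h5⟩ := hstepj j ih.1 ih.2
      exact ⟨h4, h5⟩
  refine ⟨k0, ?_, ?_, ?_⟩
  · intro k hk
    obtain ⟨j, rfl⟩ := Nat.exists_eq_add_of_le hk
    obtain ⟨h1, h2, _, _, _⟩ := hstepj j (Inv j).1 (Inv j).2
    exact ⟨h1, h2⟩
  · intro k hk
    obtain ⟨j, rfl⟩ := Nat.exists_eq_add_of_le hk
    obtain ⟨_, _, h3, _, _⟩ := hstepj j (Inv j).1 (Inv j).2
    exact h3
  · have hbound : ∀ k ≥ k0, infDist (x k) {y | F y = 0} ≤ ε * (1/2:ℝ)^(k - k0) := by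
      intro k hk
      have h := (Inv (k - k0)).2
      rwa [Nat.add_sub_cancel' hk] at h
    have htend : Tendsto (fun k : ℕ => ε * (1/2:ℝ)^(k - k0)) atTop (nhds 0) := by
      have h1 : Tendsto (fun j : ℕ => ((1:ℝ)/2)^j) atTop (nhds 0) :=
        tendsto_pow_atTop_nhds_zero_of_lt_one (by norm_num) (by norm_num)
      have h2 := (h1.comp (tendsto_sub_atTop_nat k0)).const_mul ε
      simpa using h2
    apply squeeze_zero' (Eventually.of_forall fun k => infDist_nonneg)
      (eventually_atTop.mpr ⟨k0, hbound⟩) htend
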